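/- arXiv:1305.2456 — 2 statements merged into one kernel-verified Lean document; each statement's English description precedes it below -/
import Mathlib

section
/- Let G be a finite multigraph with a fixed reference orientation and let k ∈ ℤ_{>0}^E. Then φ_G(k) equals the sum, over all totally cyclic orientations σ of G, of the number of vectors x ∈ ℤ^E with 0 < x_e < k_e for all e ∈ E that are flows with respect to σ (i.e., at every vertex the sum of x_e over edges whose σ-head is v equals the sum over edges whose σ-tail is v). Equivalently, the map sending a nowhere-zero k-flow x to the pair (σ, |x|), where σ is the unique orientation compatible with x and |x| = (|x_e|)_{e ∈ E}, is a bijection from the set of nowhere-zero k-flows onto the set of pairs (σ, y) with σ a totally cyclic orientation of G and y a σ-flow satisfying 0 < y_e < k_e for all e. -/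
open Finset

/-- A finite multigraph with a fixed (reference) orientation is given by vertex type `V`,
edge type `E`, and head/tail maps `hd tl : E → V`.  `IsFlow hd tl x` says that the integer
edge labeling `x` satisfies conservation of flow at every vertex. -/
def IsFlow {V E : Type*} [Fintype E] [DecidableEq V] (hd tl : E → V) (x : E → ℤ) : Prop :=
  ∀ v : V, ∑ e ∈ Finset.univ.filter (fun e => hd e = v), x e =
    ∑ e ∈ Finset.univ.filter (fun e => tl e = v), x e

/-- `flowCount hd tl k` is the number of nowhere-zero `k`-flows, i.e. integral flows `x`
with `x e ≠ 0` and `|x e| < k e` for every edge `e`. -/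
noncomputable def flowCount {V E : Type*} [Fintype E] [DecidableEq V]
    (hd tl : E → V) (k : E → ℤ) : ℕ :=
  Nat.card {x : E → ℤ // IsFlow hd tl x ∧ ∀ e, x e ≠ 0 ∧ |x e| < k e}

/-- The number of connected components of the underlying undirected multigraph. -/
noncomputable def numComponents {V E : Type*} [Fintype V] (hd tl : E → V) : ℕ :=
  Nat.card (SimpleGraph.fromRel
    fun u v => ∃ e, (hd e = u ∧ tl e = v) ∨ (hd e = v ∧ tl e = u)).ConnectedComponent

/-- The cyclomatic number `ξ_G = |E| − |V| + c(G)`. -/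
noncomputable def cyclomatic {V E : Type*} [Fintype V] [Fintype E] (hd tl : E → V) : ℕ :=
  Fintype.card E + numComponents hd tl - Fintype.card V

/-- An edge `b` is a bridge if deleting it increases the number of connected components. -/
def IsBridge {V E : Type*} [Fintype V] (hd tl : E → V) (b : E) : Prop :=
  numComponents hd tl <
    numComponents (fun e : {e : E // e ≠ b} => hd e.1) (fun e : {e : E // e ≠ b} => tl e.1)

/-- An orientation (given by head/tail maps) is totally cyclic if every edge lies in a
coherently oriented cycle (a cyclic sequence of distinct edges in which the head of each
edge is the tail of the next). -/
def IsTotallyCyclic {V E : Type*} (hd tl : E → V) : Prop :=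
  ∀ e : E, ∃ (n : ℕ) (c : Fin (n + 1) → E), Function.Injective c ∧ (∃ i, c i = e) ∧
    ∀ i : Fin (n + 1), hd (c i) = tl (c (i + 1))

/-- Reorienting the reference orientation by `σ : E → Bool` (`true` = keep the reference
direction, `false` = reverse it): the new head map. -/
def oHead {V E : Type*} (hd tl : E → V) (σ : E → Bool) : E → V :=
  fun e => if σ e then hd e else tl e

/-- Reorienting the reference orientation by `σ : E → Bool`: the new tail map. -/
def oTail {V E : Type*} (hd tl : E → V) (σ : E → Bool) : E → V :=
  fun e => if σ e then tl e else hd e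

/-- An orientation `σ` is compatible with an integral flow `x` if it keeps the reference
direction on edges with positive flow and reverses it on edges with negative flow. -/
def Compatible {E : Type*} (x : E → ℤ) (σ : E → Bool) : Prop :=
  ∀ e, (0 < x e → σ e = true) ∧ (x e < 0 → σ e = false)

section Aux

variable {V E : Type*}

theorem isFlow_iff [Fintype E] [DecidableEq V] (hd tl : E → V) (x : E → ℤ) :
    IsFlow hd tl x ↔ ∀ v : V, ∑ e : E,
      ((if hd e = v then x e else 0) - (if tl e = v then x e else 0)) = 0 := by
  unfold IsFlow
  refine forall_congr' fun v => ?_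
  rw [Finset.sum_sub_distrib, sub_eq_zero, ← Finset.sum_filter, ← Finset.sum_filter]

/-- Walks in a directed multigraph given by head/tail maps. -/
def GWalk (hd tl : E → V) : V → V → List E → Prop
  | a, b, [] => a = b
  | a, b, f :: L => tl f = a ∧ GWalk hd tl (hd f) b L

theorem gwalk_append {hd tl : E → V} {a c b : V} {L₁ L₂ : List E}
    (h1 : GWalk hd tl a c L₁) (h2 : GWalk hd tl c b L₂) :
    GWalk hd tl a b (L₁ ++ L₂) := by
  induction L₁ generalizing a with
  | nil => simp only [GWalk] at h1; subst h1; simpa using h2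
  | cons f L ih => exact ⟨h1.1, ih h1.2⟩

theorem gwalk_split {hd tl : E → V} {a b : V} {L₁ L₂ : List E}
    (h : GWalk hd tl a b (L₁ ++ L₂)) : ∃ c, GWalk hd tl a c L₁ ∧ GWalk hd tl c b L₂ := by
  induction L₁ generalizing a with
  | nil => exact ⟨a, rfl, by simpa using h⟩
  | cons f L ih =>
    obtain ⟨c, h1, h2⟩ := ih h.2
    exact ⟨c, ⟨h.1, h1⟩, h2⟩

theorem exists_gwalk_of_reflTransGen {hd tl : E → V} {a b : V}
    (h : Relation.ReflTransGen (fun u v => ∃ f, tl f = u ∧ hd f = v) a b) :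
    ∃ L, GWalk hd tl a b L := by
  induction h with
  | refl => exact ⟨[], rfl⟩
  | tail hab hbc ih =>
    obtain ⟨L, hL⟩ := ih
    obtain ⟨f, hf1, hf2⟩ := hbc
    subst hf2
    exact ⟨L ++ [f], gwalk_append hL ⟨hf1, rfl⟩⟩

theorem gwalk_nodup {hd tl : E → V} {a b : V} {L : List E} (h : GWalk hd tl a b L) :
    ∃ L', GWalk hd tl a b L' ∧ (a :: L'.map hd).Nodup := by
  induction L generalizing a with
  | nil => exact ⟨[], h, by simp⟩
  | cons f L ih =>
    obtain ⟨hT, hw⟩ := h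
    obtain ⟨L'', hw'', hnd⟩ := ih hw
    by_cases ha : a ∈ (f :: L'').map hd
    · obtain ⟨g, hg, hga⟩ := List.mem_map.mp ha
      obtain ⟨pre, suf, hsplit⟩ := List.append_of_mem hg
      have hwfull : GWalk hd tl a b (pre ++ g :: suf) := hsplit ▸ ⟨hT, hw''⟩
      obtain ⟨c, hc1, hc2⟩ := gwalk_split hwfull
      have hc2' : GWalk hd tl a b suf := by
        obtain ⟨htg, hwg⟩ := hc2
        rwa [hga] at hwg
      refine ⟨suf, hc2', ?_⟩
      have : ((f :: L'').map hd).Nodup := by simpa using hnd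
      rw [hsplit] at this
      simp only [List.map_append, List.map_cons, hga] at this
      exact this.sublist (List.sublist_append_right _ _)
    · refine ⟨f :: L'', ⟨hT, hw''⟩, List.nodup_cons.mpr ⟨?_, by simpa using hnd⟩⟩
      simpa using ha

end Aux

section Aux2
variable {V E : Type*}

theorem gwalk_getD_zero {hd tl : E → V} {a b : V} {L : List E} (h : GWalk hd tl a b L)
    (hL : 0 < L.length) (d : E) : tl (L.getD 0 d) = a := by
  cases L with
  | nil => simp at hL
  | cons f L => simpa using h.1

theorem gwalk_getD_chain {hd tl : E → V} {a b : V} {L : List E} (h : GWalk hd tl a b L) :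
    ∀ (i : ℕ), i + 1 < L.length → ∀ d, tl (L.getD (i + 1) d) = hd (L.getD i d) := by
  induction L generalizing a with
  | nil => simp
  | cons f L ih =>
    intro i hi d
    cases i with
    | zero =>
      simp only [List.getD_cons_succ, List.getD_cons_zero]
      exact gwalk_getD_zero h.2 (by simpa using hi) d
    | succ j =>
      simp only [List.getD_cons_succ]
      exact ih h.2 j (by simpa using hi) d

theorem gwalk_getD_last {hd tl : E → V} {a b : V} {L : List E} (h : GWalk hd tl a b L)
    (hL : 0 < L.length) (d : E) : hd (L.getD (L.length - 1) d) = b := by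
  induction L generalizing a with
  | nil => simp at hL
  | cons f L ih =>
    cases L with
    | nil => have h2 : hd f = b := h.2; simpa using h2
    | cons g M =>
      have := ih h.2 (by simp)
      simpa using this

/-- Key lemma: a positive flow is supported on directed cycles: for every edge `e₀`
the tail of `e₀` is reachable from the head of `e₀`. -/
theorem reach_of_flow [Fintype V] [Fintype E] [DecidableEq V] (hd tl : E → V)
    (y : E → ℤ) (hf : IsFlow hd tl y) (hy : ∀ e, 0 < y e) (e₀ : E) :
    Relation.ReflTransGen (fun u v => ∃ f, tl f = u ∧ hd f = v) (hd e₀) (tl e₀) := by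
  classical
  set step : V → V → Prop := fun u v => ∃ f, tl f = u ∧ hd f = v with hstep
  by_contra hR
  set R : Set V := {v | Relation.ReflTransGen step (hd e₀) v} with hRdef
  have hclosed : ∀ f : E, tl f ∈ R → hd f ∈ R := fun f hf' =>
    Relation.ReflTransGen.tail hf' ⟨f, rfl, rfl⟩
  set S : Finset V := Finset.univ.filter (fun v => v ∈ R) with hS
  have hflow := (isFlow_iff hd tl y).mp hf
  have hZ : (0 : ℤ) = ∑ e : E,
      ((if hd e ∈ S then y e else 0) - (if tl e ∈ S then y e else 0)) := by
    have h1 : (0 : ℤ) = ∑ v ∈ S, ∑ e : E,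
        ((if hd e = v then y e else 0) - (if tl e = v then y e else 0)) := by
      rw [Finset.sum_congr rfl (fun v _ => hflow v)]; simp
    have h2 : ∀ e : E, ∑ v ∈ S, ((if hd e = v then y e else 0) - (if tl e = v then y e else 0))
        = (if hd e ∈ S then y e else 0) - (if tl e ∈ S then y e else 0) := by
      intro e
      rw [Finset.sum_sub_distrib]
      congr 1 <;> exact Finset.sum_ite_eq _ _ _
    refine h1.trans ?_
    rw [Finset.sum_comm]
    exact Finset.sum_congr rfl fun e _ => h2 e
  have hnonneg : ∀ e : E, e ∈ Finset.univ → (0:ℤ) ≤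
      ((if hd e ∈ S then y e else 0) - (if tl e ∈ S then y e else 0)) := by
    intro e _
    by_cases ht : tl e ∈ S
    · have hh : hd e ∈ S := by
        simp only [hS, Finset.mem_filter, Finset.mem_univ, true_and] at ht ⊢
        exact hclosed e ht
      simp [ht, hh]
    · split_ifs with h' <;> simp [ht, le_of_lt (hy e)]
  have he₀ : (0:ℤ) < ((if hd e₀ ∈ S then y e₀ else 0) - (if tl e₀ ∈ S then y e₀ else 0)) := by
    have h1 : hd e₀ ∈ S := by
      simp only [hS, Finset.mem_filter, Finset.mem_univ, true_and]
      exact Relation.ReflTransGen.refl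
    have h2 : tl e₀ ∉ S := by
      simp only [hS, Finset.mem_filter, Finset.mem_univ, true_and]
      exact hR
    simp [h1, h2, hy e₀]
  have hle : ((if hd e₀ ∈ S then y e₀ else 0) - (if tl e₀ ∈ S then y e₀ else 0)) ≤
      ∑ e : E, ((if hd e ∈ S then y e else 0) - (if tl e ∈ S then y e else 0)) :=
    Finset.single_le_sum hnonneg (Finset.mem_univ e₀)
  linarith

end Aux2

section Aux3
variable {V E : Type*}

theorem isTotallyCyclic_of_flow [Fintype V] [Fintype E] [DecidableEq V] (hd tl : E → V)
    (y : E → ℤ) (hf : IsFlow hd tl y) (hy : ∀ e, 0 < y e) : IsTotallyCyclic hd tl := by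
  intro e₀
  obtain ⟨L0, hL0⟩ := exists_gwalk_of_reflTransGen (reach_of_flow hd tl y hf hy e₀)
  obtain ⟨L, hw, hnd⟩ := gwalk_nodup hL0
  set n := L.length with hn
  set W := e₀ :: L with hW
  have hWlen : W.length = n + 1 := by simp [hW, hn]
  have hWnd : W.Nodup := by
    have h1 : (L.map hd).Nodup := (List.nodup_cons.mp hnd).2
    have h2 : hd e₀ ∉ L.map hd := (List.nodup_cons.mp hnd).1
    exact List.nodup_cons.mpr ⟨fun hmem => h2 (List.mem_map_of_mem (f := hd) hmem), h1.of_map⟩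
  refine ⟨n, fun i => W.getD i.val e₀, ?_, ⟨0, by simp [hW]⟩, ?_⟩
  · intro i j hij
    dsimp only at hij
    have hi : i.val < W.length := by rw [hWlen]; exact i.isLt
    have hj : j.val < W.length := by rw [hWlen]; exact j.isLt
    rw [List.getD_eq_getElem W e₀ hi, List.getD_eq_getElem W e₀ hj] at hij
    exact Fin.ext ((hWnd.getElem_inj_iff).mp hij)
  · intro i
    show hd (W.getD i.val e₀) = tl (W.getD ((i + (1 : Fin (n+1))).val) e₀)
    have hval : (i + (1 : Fin (n+1))).val = (i.val + 1) % (n + 1) := by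
      rw [Fin.val_add, Fin.val_one']
      conv_rhs => rw [Nat.add_mod]
      rw [Nat.mod_eq_of_lt i.isLt]
    by_cases hi : i.val = n
    · have h0 : (i + (1 : Fin (n+1))).val = 0 := by rw [hval, hi, Nat.mod_self]
      rw [h0]
      simp only [hW, List.getD_cons_zero]
      rcases Nat.eq_zero_or_pos n with hn0 | hn0
      · have hLnil : L = [] := List.length_eq_zero_iff.mp (by omega)
        rw [hi, hn0]
        simp only [hW, List.getD_cons_zero]
        rw [hLnil] at hw
        exact hw
      · rw [hi]
        have hsucc : n = (n - 1) + 1 := by omega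
        rw [hsucc]
        simp only [hW, List.getD_cons_succ]
        exact gwalk_getD_last hw (by omega) e₀
    · have hlt : i.val + 1 < n + 1 := by have := i.isLt; omega
      have h1 : (i + (1 : Fin (n+1))).val = i.val + 1 := by
        rw [hval, Nat.mod_eq_of_lt hlt]
      rw [h1]
      rcases Nat.eq_zero_or_pos i.val with h0 | hpos
      · rw [h0]
        simp only [hW, List.getD_cons_zero, List.getD_cons_succ]
        exact (gwalk_getD_zero hw (by omega) e₀).symm
      · have hsucc : i.val = (i.val - 1) + 1 := by omega
        rw [hsucc]
        simp only [hW, List.getD_cons_succ]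
        exact (gwalk_getD_chain hw (i.val - 1) (by omega) e₀).symm

end Aux3

section Aux4
variable {V E : Type*}

theorem isFlow_reorient [Fintype E] [DecidableEq V] (hd tl : E → V) (σ : E → Bool)
    (x y : E → ℤ)
    (hxy : ∀ e, (σ e = true ∧ y e = x e) ∨ (σ e = false ∧ y e = -x e)) :
    IsFlow hd tl x ↔ IsFlow (oHead hd tl σ) (oTail hd tl σ) y := by
  rw [isFlow_iff, isFlow_iff]
  refine forall_congr' fun v => ?_
  have key : ∀ e, ((if oHead hd tl σ e = v then y e else 0) -
      (if oTail hd tl σ e = v then y e else 0)) =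
      ((if hd e = v then x e else 0) - (if tl e = v then x e else 0)) := by
    intro e
    rcases hxy e with ⟨hσ, hy⟩ | ⟨hσ, hy⟩ <;>
      simp [oHead, oTail, hσ, hy] <;> split_ifs <;> ring
  rw [Finset.sum_congr rfl fun e _ => key e]

end Aux4

/-- `φ_G(k)` equals the number of pairs `(σ, y)` with `σ` a totally
cyclic orientation of `G` and `y` a `σ`-flow with `0 < y_e < k_e` for all `e`; indeed the
map sending a nowhere-zero `k`-flow `x` to `(σ_x, |x|)`, where `σ_x` is the unique
orientation compatible with `x`, is a bijection between the two sets. -/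
theorem flow_count_eq_sum_over_totally_cyclic
    {V E : Type*} [Fintype V] [Fintype E] [DecidableEq V] [DecidableEq E]
    (hd tl : E → V) (k : E → ℤ) (hk : ∀ e, 0 < k e) :
    flowCount hd tl k =
      Nat.card {σy : (E → Bool) × (E → ℤ) //
        IsTotallyCyclic (oHead hd tl σy.1) (oTail hd tl σy.1) ∧
        IsFlow (oHead hd tl σy.1) (oTail hd tl σy.1) σy.2 ∧
        ∀ e, 0 < σy.2 e ∧ σy.2 e < k e} ∧
    Set.BijOn
      (fun x : E → ℤ => ((fun e => decide (0 < x e), fun e => |x e|) :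
        (E → Bool) × (E → ℤ)))
      {x : E → ℤ | IsFlow hd tl x ∧ ∀ e, x e ≠ 0 ∧ |x e| < k e}
      {σy : (E → Bool) × (E → ℤ) |
        IsTotallyCyclic (oHead hd tl σy.1) (oTail hd tl σy.1) ∧
        IsFlow (oHead hd tl σy.1) (oTail hd tl σy.1) σy.2 ∧
        ∀ e, 0 < σy.2 e ∧ σy.2 e < k e} := by
  have hbij : Set.BijOn
      (fun x : E → ℤ => ((fun e => decide (0 < x e), fun e => |x e|) :
        (E → Bool) × (E → ℤ)))
      {x : E → ℤ | IsFlow hd tl x ∧ ∀ e, x e ≠ 0 ∧ |x e| < k e}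
      {σy : (E → Bool) × (E → ℤ) |
        IsTotallyCyclic (oHead hd tl σy.1) (oTail hd tl σy.1) ∧
        IsFlow (oHead hd tl σy.1) (oTail hd tl σy.1) σy.2 ∧
        ∀ e, 0 < σy.2 e ∧ σy.2 e < k e} := by
    refine ⟨?_, ?_, ?_⟩
    · -- MapsTo
      rintro x ⟨hflow, hne⟩
      have hxy : ∀ e, ((fun e => decide (0 < x e)) e = true ∧ |x e| = x e) ∨
          ((fun e => decide (0 < x e)) e = false ∧ |x e| = -x e) := by
        intro e
        rcases lt_trichotomy (x e) 0 with h | h | h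
        · exact Or.inr ⟨decide_eq_false (by omega), abs_of_neg h⟩
        · exact absurd h (hne e).1
        · exact Or.inl ⟨decide_eq_true h, abs_of_pos h⟩
      have hflow' : IsFlow (oHead hd tl fun e => decide (0 < x e))
          (oTail hd tl fun e => decide (0 < x e)) (fun e => |x e|) :=
        (isFlow_reorient hd tl _ x _ hxy).mp hflow
      exact ⟨isTotallyCyclic_of_flow _ _ _ hflow'
          (fun e => abs_pos.mpr (hne e).1), hflow',
        fun e => ⟨abs_pos.mpr (hne e).1, (hne e).2⟩⟩
    · -- InjOn
      rintro x1 ⟨_, hne1⟩ x2 ⟨_, hne2⟩ heq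
      have hb : ∀ e, decide (0 < x1 e) = decide (0 < x2 e) := fun e =>
        congrFun (congrArg Prod.fst heq) e
      have ha : ∀ e, |x1 e| = |x2 e| := fun e => congrFun (congrArg Prod.snd heq) e
      funext e
      by_cases h1 : 0 < x1 e
      · have h2 : 0 < x2 e := by
          have := hb e; rw [decide_eq_true h1] at this
          exact of_decide_eq_true this.symm
        have ha' := ha e
        rw [abs_of_pos h1, abs_of_pos h2] at ha'
        exact ha'
      · have h1' : x1 e < 0 := lt_of_le_of_ne (not_lt.mp h1) (hne1 e).1
        have h2 : ¬ 0 < x2 e := by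
          have := hb e; rw [decide_eq_false h1] at this
          exact of_decide_eq_false this.symm
        have h2' : x2 e < 0 := lt_of_le_of_ne (not_lt.mp h2) (hne2 e).1
        have := ha e
        rw [abs_of_neg h1', abs_of_neg h2'] at this
        omega
    · -- SurjOn
      rintro ⟨σ, y⟩ ⟨htc, hflow, hpos⟩
      dsimp only at htc hflow hpos
      set x : E → ℤ := fun e => if σ e then y e else -y e with hx
      have hxy : ∀ e, (σ e = true ∧ y e = x e) ∨ (σ e = false ∧ y e = -x e) := by
        intro e
        by_cases hσ : σ e
        · exact Or.inl ⟨hσ, by simp [hx, hσ]⟩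
        · exact Or.inr ⟨Bool.eq_false_iff.mpr hσ, by simp [hx, hσ]⟩
      refine ⟨x, ⟨(isFlow_reorient hd tl σ x y hxy).mpr hflow, ?_⟩, ?_⟩
      · intro e
        obtain ⟨hp, hb⟩ := hpos e
        by_cases hσ : σ e
        · constructor
          · simp only [hx, hσ, if_true]; omega
          · rw [show x e = y e by simp [hx, hσ], abs_of_pos hp]; exact hb
        · constructor
          · simp only [hx, hσ, if_false]; omega
          · rw [show x e = -y e by simp [hx, hσ], abs_of_neg (by omega : -y e < 0)]; omega
      · dsimp only
        refine Prod.ext ?_ ?_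
        · funext e
          show decide (0 < x e) = σ e
          obtain ⟨hp, _⟩ := hpos e
          by_cases hσ : σ e
          · rw [show x e = y e by simp [hx, hσ]]
            simp [hσ, hp]
          · rw [show x e = -y e by simp [hx, hσ]]
            have hnp : ¬ (0 < -y e) := by omega
            simp [Bool.eq_false_iff.mpr hσ, hnp, hp.le]
        · funext e
          show |x e| = y e
          obtain ⟨hp, _⟩ := hpos e
          by_cases hσ : σ e
          · rw [show x e = y e by simp [hx, hσ], abs_of_pos hp]
          · rw [show x e = -y e by simp [hx, hσ], abs_of_neg (by omega : -y e < 0)]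
            ring
  exact ⟨Nat.card_congr (Set.BijOn.equiv _ hbij), hbij⟩
end

section
/- Let 3K_2 be the multigraph consisting of two vertices joined by three parallel edges, with any fixed orientation, and let (k_1, k_2, k_3) ∈ ℤ_{>0}^3 with k_1 ≤ k_2 ≤ k_3 (where k_i is the capacity of edge e_i). Then the number of nowhere-zero (k_1,k_2,k_3)-flows on 3K_2 is: (2k_1 − 2)(2k_2 − 3) if k_3 > k_1 + k_2, and −k_1² + 2k_1k_2 + 2k_1k_3 − 5k_1 − k_2² + 2k_2k_3 − 3k_2 − k_3² − k_3 + 6 if k_3 ≤ k_1 + k_2. -/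
open Finset

noncomputable def Sfin (k0 k1 k2 : ℤ) : Finset (ℤ × ℤ) :=
  ((Finset.Ioo (-k0) k0) ×ˢ (Finset.Ioo (-k1) k1)).filter
    (fun p => p.1 ≠ 0 ∧ p.2 ≠ 0 ∧ p.1 + p.2 ≠ 0 ∧ |p.1 + p.2| < k2)

lemma mem_Sfin {k0 k1 k2 : ℤ} {p : ℤ × ℤ} :
    p ∈ Sfin k0 k1 k2 ↔ -k0 < p.1 ∧ p.1 < k0 ∧ -k1 < p.2 ∧ p.2 < k1 ∧
      p.1 ≠ 0 ∧ p.2 ≠ 0 ∧ p.1 + p.2 ≠ 0 ∧ -k2 < p.1 + p.2 ∧ p.1 + p.2 < k2 := by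
  simp only [Sfin, Finset.mem_filter, Finset.mem_product, Finset.mem_Ioo, abs_lt]
  tauto

lemma pairFin : ∀ a b : Fin 2, ({a, b} : Finset (Fin 2)) = {0, 1} →
    (a = 0 ∧ b = 1) ∨ (a = 1 ∧ b = 0) := by decide

def sgn (hd : Fin 3 → Fin 2) (i : Fin 3) : ℤ := if hd i = 0 then 1 else -1

lemma sgn_cases (hd : Fin 3 → Fin 2) (i : Fin 3) : sgn hd i = 1 ∨ sgn hd i = -1 := by
  unfold sgn; split <;> simp

lemma sgn_mul_self (hd : Fin 3 → Fin 2) (i : Fin 3) : sgn hd i * sgn hd i = 1 := by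
  rcases sgn_cases hd i with h | h <;> rw [h] <;> norm_num

lemma abs_sgn_mul (hd : Fin 3 → Fin 2) (i : Fin 3) (y : ℤ) : |sgn hd i * y| = |y| := by
  rcases sgn_cases hd i with h | h <;> rw [h] <;> simp

lemma sgn_mul_ne_zero (hd : Fin 3 → Fin 2) (i : Fin 3) (y : ℤ) (hy : y ≠ 0) :
    sgn hd i * y ≠ 0 := by
  rcases sgn_cases hd i with h | h <;> rw [h] <;> simpa

lemma isFlow_iff_s13 (hd tl : Fin 3 → Fin 2)
    (h0 : ({hd 0, tl 0} : Finset (Fin 2)) = {0, 1})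
    (h1 : ({hd 1, tl 1} : Finset (Fin 2)) = {0, 1})
    (h2 : ({hd 2, tl 2} : Finset (Fin 2)) = {0, 1})
    (x : Fin 3 → ℤ) :
    IsFlow hd tl x ↔ sgn hd 0 * x 0 + sgn hd 1 * x 1 + sgn hd 2 * x 2 = 0 := by
  rcases pairFin _ _ h0 with ⟨ha0, hb0⟩ | ⟨ha0, hb0⟩ <;>
  rcases pairFin _ _ h1 with ⟨ha1, hb1⟩ | ⟨ha1, hb1⟩ <;>
  rcases pairFin _ _ h2 with ⟨ha2, hb2⟩ | ⟨ha2, hb2⟩ <;>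
  · simp only [IsFlow, Fin.forall_fin_two, Finset.sum_filter, Fin.sum_univ_three,
      ha0, hb0, ha1, hb1, ha2, hb2, sgn]
    norm_num
    omega

lemma flowCount_eq (hd tl : Fin 3 → Fin 2)
    (h0 : ({hd 0, tl 0} : Finset (Fin 2)) = {0, 1})
    (h1 : ({hd 1, tl 1} : Finset (Fin 2)) = {0, 1})
    (h2 : ({hd 2, tl 2} : Finset (Fin 2)) = {0, 1})
    (k : Fin 3 → ℤ) :
    flowCount hd tl k = (Sfin (k 0) (k 1) (k 2)).card := by
  rw [flowCount, ← Nat.card_eq_finsetCard]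
  refine Nat.card_congr ?_
  refine
  { toFun := fun x => ⟨(sgn hd 0 * x.1 0, sgn hd 1 * x.1 1), ?_⟩
    invFun := fun p => ⟨![sgn hd 0 * p.1.1, sgn hd 1 * p.1.2, -(sgn hd 2 * (p.1.1 + p.1.2))], ?_⟩
    left_inv := ?_
    right_inv := ?_ }
  · obtain ⟨x, hf, hb⟩ := x
    rw [isFlow_iff_s13 hd tl h0 h1 h2] at hf
    have hsum : sgn hd 0 * x 0 + sgn hd 1 * x 1 = -(sgn hd 2 * x 2) := by linarith
    rw [mem_Sfin]
    have b0 := hb 0; have b1 := hb 1; have b2 := hb 2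
    have c0 : -k 0 < sgn hd 0 * x 0 ∧ sgn hd 0 * x 0 < k 0 :=
      abs_lt.mp (by rw [abs_sgn_mul]; exact b0.2)
    have c1 : -k 1 < sgn hd 1 * x 1 ∧ sgn hd 1 * x 1 < k 1 :=
      abs_lt.mp (by rw [abs_sgn_mul]; exact b1.2)
    have c2 : -k 2 < sgn hd 0 * x 0 + sgn hd 1 * x 1 ∧
        sgn hd 0 * x 0 + sgn hd 1 * x 1 < k 2 :=
      abs_lt.mp (by rw [hsum, abs_neg, abs_sgn_mul]; exact b2.2)
    exact ⟨c0.1, c0.2, c1.1, c1.2, sgn_mul_ne_zero hd 0 _ b0.1, sgn_mul_ne_zero hd 1 _ b1.1,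
      by rw [hsum]; exact neg_ne_zero.mpr (sgn_mul_ne_zero hd 2 _ b2.1), c2.1, c2.2⟩
  · obtain ⟨⟨a, b⟩, hp⟩ := p
    rw [mem_Sfin] at hp
    simp only at hp
    obtain ⟨q1, q2, q3, q4, q5, q6, q7, q8, q9⟩ := hp
    constructor
    · rw [isFlow_iff_s13 hd tl h0 h1 h2]
      simp only [Matrix.cons_val_zero, Matrix.cons_val_one, Matrix.head_cons,
        Matrix.cons_val_two, Matrix.tail_cons]
      linear_combination a * sgn_mul_self hd 0 + b * sgn_mul_self hd 1
        - (a + b) * sgn_mul_self hd 2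
    · intro e
      fin_cases e <;> simp only [show ((⟨0, by omega⟩ : Fin 3)) = 0 from rfl,
        show ((⟨1, by omega⟩ : Fin 3)) = 1 from rfl, show ((⟨2, by omega⟩ : Fin 3)) = 2 from rfl,
        Matrix.cons_val_zero, Matrix.cons_val_one, Matrix.head_cons,
        Matrix.cons_val_two, Matrix.tail_cons]
      · exact ⟨sgn_mul_ne_zero hd 0 _ q5, by rw [abs_sgn_mul]; exact abs_lt.mpr ⟨q1, q2⟩⟩
      · exact ⟨sgn_mul_ne_zero hd 1 _ q6, by rw [abs_sgn_mul]; exact abs_lt.mpr ⟨q3, q4⟩⟩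
      · exact ⟨neg_ne_zero.mpr (sgn_mul_ne_zero hd 2 _ q7),
          by rw [abs_neg, abs_sgn_mul]; exact abs_lt.mpr ⟨q8, q9⟩⟩
  · rintro ⟨x, hf, hb⟩
    have hf' := (isFlow_iff_s13 hd tl h0 h1 h2 x).mp hf
    apply Subtype.ext
    funext i
    fin_cases i <;> simp only [show ((⟨0, by omega⟩ : Fin 3)) = 0 from rfl,
      show ((⟨1, by omega⟩ : Fin 3)) = 1 from rfl, show ((⟨2, by omega⟩ : Fin 3)) = 2 from rfl,
      Matrix.cons_val_zero, Matrix.cons_val_one, Matrix.head_cons,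
      Matrix.cons_val_two, Matrix.tail_cons]
    · linear_combination x 0 * sgn_mul_self hd 0
    · linear_combination x 1 * sgn_mul_self hd 1
    · linear_combination (-(sgn hd 2)) * hf' + x 2 * sgn_mul_self hd 2
  · rintro ⟨⟨a, b⟩, hp⟩
    apply Subtype.ext
    simp only [Matrix.cons_val_zero, Matrix.cons_val_one, Matrix.head_cons, Prod.mk.injEq]
    constructor
    · linear_combination a * sgn_mul_self hd 0
    · linear_combination b * sgn_mul_self hd 1

lemma Sfin_card (k1 k2 : ℤ) (h12 : k1 ≤ k2) (k0 : ℤ) (hk0 : 1 ≤ k0) (h01 : k0 ≤ k1) :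
    ((Sfin k0 k1 k2).card : ℤ) =
      2 * (k0 - 1) * (2 * k1 - 3)
        - max 0 (k0 + k1 - k2) * (max 0 (k0 + k1 - k2) - 1) := by
  refine Int.le_induction
    (motive := fun n _ => n ≤ k1 → ((Sfin n k1 k2).card : ℤ) =
      2 * (n - 1) * (2 * k1 - 3)
        - max 0 (n + k1 - k2) * (max 0 (n + k1 - k2) - 1)) ?_ ?_ k0 hk0 h01
  · intro h01'
    have he : Sfin 1 k1 k2 = ∅ := by
      ext p
      simp only [mem_Sfin, Finset.notMem_empty, iff_false]
      omega
    rw [he]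
    have hs : max 0 (1 + k1 - k2) = 0 ∨ max 0 (1 + k1 - k2) = 1 := by omega
    rcases hs with h | h <;> rw [h] <;> simp <;> ring
  · intro k0 hk0 ih h01
    have h01' : k0 ≤ k1 := by omega
    set Rp : Finset (ℤ × ℤ) := (Sfin (k0 + 1) k1 k2).filter (fun p => p.1 = k0) with hRp
    set Rm : Finset (ℤ × ℤ) := (Sfin (k0 + 1) k1 k2).filter (fun p => p.1 = -k0) with hRm
    have hsplit : Sfin (k0 + 1) k1 k2 = Sfin k0 k1 k2 ∪ (Rp ∪ Rm) := by
      ext p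
      simp only [hRp, hRm, Finset.mem_union, Finset.mem_filter, mem_Sfin]
      omega
    have hd1 : Disjoint (Sfin k0 k1 k2) (Rp ∪ Rm) := by
      rw [Finset.disjoint_left]
      intro p hp hp'
      simp only [hRp, hRm, Finset.mem_union, Finset.mem_filter, mem_Sfin] at hp hp'
      omega
    have hd2 : Disjoint Rp Rm := by
      rw [Finset.disjoint_left]
      intro p hp hp'
      simp only [hRp, hRm, Finset.mem_filter] at hp hp'
      omega
    have hneg : Rm = Rp.image (fun p => (-p.1, -p.2)) := by
      ext ⟨a, b⟩
      simp only [hRp, hRm, Finset.mem_image, Finset.mem_filter, mem_Sfin, Prod.mk.injEq]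
      constructor
      · intro h
        refine ⟨(-a, -b), ?_, ?_⟩ <;> simp <;> omega
      · rintro ⟨⟨x, y⟩, hq, hx, hy⟩
        simp only at hq hx hy
        omega
    have hinj2 : Function.Injective (fun p : ℤ × ℤ => (-p.1, -p.2)) := by
      intro a b h
      simp only [Prod.mk.injEq] at h
      ext <;> omega
    have hcRm : Rm.card = Rp.card := by rw [hneg, Finset.card_image_of_injective _ hinj2]
    have hRpEq : Rp = (((Finset.Ioo (-k1) (min k1 (k2 - k0))).erase 0).erase (-k0)).image
        (fun b => (k0, b)) := by
      ext ⟨a, b⟩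
      simp only [hRp, Finset.mem_image, Finset.mem_erase, Finset.mem_Ioo,
        Finset.mem_filter, mem_Sfin, Prod.mk.injEq]
      constructor
      · intro h
        exact ⟨b, by omega, by omega, rfl⟩
      · rintro ⟨x, hx, rfl, rfl⟩
        omega
    have hmem0 : (0 : ℤ) ∈ Finset.Ioo (-k1) (min k1 (k2 - k0)) := by
      simp only [Finset.mem_Ioo]; omega
    have hmemk : (-k0 : ℤ) ∈ (Finset.Ioo (-k1) (min k1 (k2 - k0))).erase 0 := by
      simp only [Finset.mem_erase, Finset.mem_Ioo]; omega
    have hcRp : (Rp.card : ℤ) = min k1 (k2 - k0) + k1 - 3 := by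
      rw [hRpEq, Finset.card_image_of_injective _
        (fun a b h => by simpa using h : Function.Injective (fun b : ℤ => ((k0 : ℤ), b))),
        Finset.card_erase_of_mem hmemk, Finset.card_erase_of_mem hmem0, Int.card_Ioo]
      omega
    have hIH := ih h01'
    have hcard : ((Sfin (k0 + 1) k1 k2).card : ℤ)
        = (Sfin k0 k1 k2).card + Rp.card + Rp.card := by
      rw [hsplit, Finset.card_union_of_disjoint hd1, Finset.card_union_of_disjoint hd2, hcRm]
      push_cast
      ring
    rw [hcard, hIH, hcRp]
    rcases le_or_gt k2 (k0 + k1) with hc | hc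
    · have e1 : max 0 (k0 + k1 - k2) = k0 + k1 - k2 := by omega
      have e2 : max 0 (k0 + 1 + k1 - k2) = k0 + 1 + k1 - k2 := by omega
      have e3 : min k1 (k2 - k0) = k2 - k0 := by omega
      rw [e1, e2, e3]; ring
    · have e1 : max 0 (k0 + k1 - k2) = 0 := by omega
      have e2 : max 0 (k0 + 1 + k1 - k2) = 0 := by omega
      have e3 : min k1 (k2 - k0) = k1 := by omega
      rw [e1, e2, e3]; ring

/-- For the multigraph `3K₂` (two vertices joined by three parallel
edges) with any fixed orientation, and capacities `0 < k₁ ≤ k₂ ≤ k₃`, the number of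
nowhere-zero `(k₁,k₂,k₃)`-flows is `(2k₁ − 2)(2k₂ − 3)` if `k₃ > k₁ + k₂`, and
`−k₁² + 2k₁k₂ + 2k₁k₃ − 5k₁ − k₂² + 2k₂k₃ − 3k₂ − k₃² − k₃ + 6` if `k₃ ≤ k₁ + k₂`. -/
theorem flow_count_3K2
    (hd tl : Fin 3 → Fin 2)
    (h0 : ({hd 0, tl 0} : Finset (Fin 2)) = {0, 1})
    (h1 : ({hd 1, tl 1} : Finset (Fin 2)) = {0, 1})
    (h2 : ({hd 2, tl 2} : Finset (Fin 2)) = {0, 1})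
    (k : Fin 3 → ℤ) (hk : ∀ e, 0 < k e) (h01 : k 0 ≤ k 1) (h12 : k 1 ≤ k 2) :
    (k 0 + k 1 < k 2 → (flowCount hd tl k : ℤ) = (2 * k 0 - 2) * (2 * k 1 - 3)) ∧
    (k 2 ≤ k 0 + k 1 → (flowCount hd tl k : ℤ) =
      -(k 0)^2 + 2 * k 0 * k 1 + 2 * k 0 * k 2 - 5 * k 0
        - (k 1)^2 + 2 * k 1 * k 2 - 3 * k 1 - (k 2)^2 - k 2 + 6) := by
  rw [flowCount_eq hd tl h0 h1 h2 k]
  have hcard := Sfin_card (k 1) (k 2) h12 (k 0) (hk 0) h01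
  constructor
  · intro hc
    rw [hcard]
    have e1 : max 0 (k 0 + k 1 - k 2) = 0 := by omega
    rw [e1]; ring
  · intro hc
    rw [hcard]
    have e1 : max 0 (k 0 + k 1 - k 2) = k 0 + k 1 - k 2 := by omega
    rw [e1]; ring
end
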